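/- For labeled graphs, the induced subgraph ordering restricted to graphs over a finite label set and of bounded longest simple path length k is a well-quasi order (Ding's theorem, labeled version): there is no infinite antichain and no infinite strictly descending behavior—every infinite sequence of k-path-bounded finite graphs labeled from a wqo (S,≤) contains i < j with Gᵢ ⊑ Gⱼ under the label-respecting induced subgraph ordering. -/

import Mathlib

/-- A finite `S`-labeled simple graph: vertices `Fin n`, a simple graph
structure and a labeling. -/
structure LSGraph (S : Type*) where
  n : ℕ
  G : SimpleGraph (Fin n)
  L : Fin n → S

/-- A labeled graph is `k`-path-bounded if every simple path has length at
most `k`. -/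
def LSGraph.PathBounded {S : Type*} (k : ℕ) (θ : LSGraph S) : Prop :=
  ∀ (u v : Fin θ.n) (p : θ.G.Walk u v), p.IsPath → p.length ≤ k

/-- Label-respecting induced subgraph ordering. -/
def LSGraph.Emb {S : Type*} (le : S → S → Prop) (θ₁ θ₂ : LSGraph S) : Prop :=
  ∃ h : Fin θ₁.n ↪ Fin θ₂.n,
    (∀ u v : Fin θ₁.n, θ₁.G.Adj u v ↔ θ₂.G.Adj (h u) (h v)) ∧
    ∀ v : Fin θ₁.n, le (θ₁.L v) (θ₂.L (h v))

/-- A well-quasi ordering: reflexive, transitive, and every infinite sequence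
contains an increasing pair. -/
def IsWqo {X : Type*} (le : X → X → Prop) : Prop :=
  Reflexive le ∧ Transitive le ∧ ∀ f : ℕ → X, ∃ i j : ℕ, i < j ∧ le (f i) (f j)


inductive RT (α : Type*) : Type _
  | node (a : α) (ts : List (RT α)) : RT α

namespace RT
variable {α β : Type*}

theorem sizeOf_lt_of_mem [SizeOf α] {a : α} {ts : List (RT α)} {t : RT α} (h : t ∈ ts) :
    sizeOf t < sizeOf (RT.node a ts) := by
  have := List.sizeOf_lt_of_mem h
  cases ts <;> simp_all [RT.node.sizeOf_spec] <;> omega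

@[elab_as_elim]
theorem ind {motive : RT α → Prop}
    (h : ∀ a ts, (∀ t ∈ ts, motive t) → motive (.node a ts)) : ∀ t, motive t
  | .node a ts => h a ts (fun t _ => ind h t)
termination_by t => sizeOf t
decreasing_by exact sizeOf_lt_of_mem (by assumption)

def depth : RT α → ℕ
  | .node _ ts => (ts.attach.map (fun x => depth x.1)).foldr max 0 + 1
termination_by t => sizeOf t
decreasing_by exact sizeOf_lt_of_mem x.2

@[simp] theorem depth_node (a : α) (ts : List (RT α)) :
    depth (.node a ts) = (ts.map depth).foldr max 0 + 1 := by
  rw [depth]; congr 1; simp [List.attach_map_val]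

def flat : RT α → List α
  | .node a ts => a :: (ts.attach.map (fun x => flat x.1)).flatten
termination_by t => sizeOf t
decreasing_by exact sizeOf_lt_of_mem x.2

@[simp] theorem flat_node (a : α) (ts : List (RT α)) :
    flat (.node a ts) = a :: ts.flatMap flat := by
  rw [flat]; simp [List.flatMap, List.attach_map_val]

def map (f : α → β) : RT α → RT β
  | .node a ts => .node (f a) (ts.attach.map (fun x => map f x.1))
termination_by t => sizeOf t
decreasing_by exact sizeOf_lt_of_mem x.2

@[simp] theorem map_node (f : α → β) (a : α) (ts : List (RT α)) :
    map f (.node a ts) = .node (f a) (ts.map (map f)) := by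
  rw [map]; congr 1; simp [List.attach_map_val]

theorem depth_map (f : α → β) : ∀ t : RT α, (t.map f).depth = t.depth := by
  intro t
  induction t using ind with
  | h a ts ih =>
    simp only [map_node, depth_node, List.map_map]
    congr 2
    exact List.map_congr_left fun t ht => ih t ht

theorem flat_map (f : α → β) : ∀ t : RT α, (t.map f).flat = t.flat.map f := by
  intro t
  induction t using ind with
  | h a ts ih =>
    simp only [map_node, flat_node, List.map_cons, List.flatMap_map, List.map_flatMap]
    congr 1
    exact List.flatMap_congr fun t ht => ih t ht

theorem depth_pos : ∀ t : RT α, 0 < t.depth := by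
  rintro ⟨a, ts⟩; simp

def dat : RT α → α | .node a _ => a
def children : RT α → List (RT α) | .node _ ts => ts

@[simp] theorem dat_node (a : α) (ts : List (RT α)) : dat (.node a ts) = a := rfl
@[simp] theorem children_node (a : α) (ts : List (RT α)) : children (.node a ts) = ts := rfl
theorem eta : ∀ t : RT α, RT.node t.dat t.children = t := by rintro ⟨a, ts⟩; rfl

theorem depth_lt_of_mem {ts : List (RT α)} {a : α} {t : RT α} (h : t ∈ ts) :
    t.depth < (RT.node a ts).depth := by
  simp only [depth_node]
  have : t.depth ≤ (ts.map depth).foldr max 0 := by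
    induction ts with
    | nil => simp at h
    | cons s ts ih =>
      rcases List.mem_cons.1 h with rfl | h
      · simp [le_max_iff]
      · simp only [List.map_cons, List.foldr_cons, le_max_iff]; exact Or.inr (ih h)
  omega

theorem dat_mem_flat : ∀ t : RT α, t.dat ∈ t.flat := by
  rintro ⟨a, ts⟩; simp

theorem flat_subset_of_mem {ts : List (RT α)} {a : α} {t : RT α} (h : t ∈ ts) :
    ∀ x ∈ t.flat, x ∈ (RT.node a ts).flat := by
  intro x hx
  simp only [flat_node, List.mem_cons, List.mem_flatMap]
  exact Or.inr ⟨t, h, hx⟩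

end RT

section TEmb
variable {α : Type*} (r : α → α → Prop)

inductive TEmb : RT α → RT α → Prop
  | node {a b : α} {ts us : List (RT α)} :
      r a b → List.SublistForall₂ (TEmb) ts us → TEmb (.node a ts) (.node b us)

variable {r}

theorem TEmb.refl (href : ∀ a, r a a) : ∀ t, TEmb r t t := by
  intro t
  induction t using RT.ind with
  | h a ts ih =>
    exact .node (href a) (List.sublistForall₂_iff.2 ⟨ts, List.forall₂_same.2 ih, List.Sublist.refl _⟩)

/-- local version of transitivity for SublistForall₂ -/
theorem sublistForall₂_trans_local {R : α' → α' → Prop} :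
    ∀ {a b c : List α'}, (∀ z ∈ c, ∀ x y, R x y → R y z → R x z) →
      List.SublistForall₂ R a b → List.SublistForall₂ R b c → List.SublistForall₂ R a c := by
  intro a b c
  revert a b
  induction c with
  | nil =>
    rintro a b _ h1 h2
    cases h2; cases h1; exact List.SublistForall₂.nil
  | cons z c ih =>
    rintro a b H h1 h2
    have Hc : ∀ z ∈ c, ∀ x y, R x y → R y z → R x z := fun z hz => H z (List.mem_cons_of_mem _ hz)
    cases h2 with
    | nil => cases h1; exact List.SublistForall₂.nil
    | cons hbc tbc =>
      cases h1 with
      | nil => exact List.SublistForall₂.nil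
      | cons hab tab =>
        exact List.SublistForall₂.cons (H z (List.mem_cons_self) _ _ hab hbc) (ih Hc tab tbc)
      | cons_right atb => exact List.SublistForall₂.cons_right (ih Hc atb tbc)
    | cons_right btc => exact List.SublistForall₂.cons_right (ih Hc h1 btc)

theorem TEmb.trans (htr : Transitive r) :
    ∀ t₁ t₂ t₃, TEmb r t₁ t₂ → TEmb r t₂ t₃ → TEmb r t₁ t₃ := by
  have key : ∀ n, ∀ t₃ : RT α, t₃.depth ≤ n →
      ∀ t₁ t₂, TEmb r t₁ t₂ → TEmb r t₂ t₃ → TEmb r t₁ t₃ := by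
    intro n
    induction n with
    | zero => intro t₃ h; exact absurd h (by have := t₃.depth_pos; omega)
    | succ n ih =>
      rintro ⟨c, us⟩ hd t₁ t₂ h12 h23
      cases h23 with
      | @node b _ vs _ hbc hvs =>
        cases h12 with
        | node hab hts =>
          refine TEmb.node (htr hab hbc) ?_
          refine sublistForall₂_trans_local ?_ hts hvs
          intro z hz x y hxy hyz
          exact ih z (by have := RT.depth_lt_of_mem (a := c) hz; omega) x y hxy hyz
  intro t₁ t₂ t₃ h12 h23
  exact key t₃.depth t₃ le_rfl t₁ t₂ h12 h23

end TEmb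

section PWO
open Set
variable {α : Type*} {r : α → α → Prop}

theorem pwo_trees (href : ∀ a, r a a) (htr : Transitive r) {s : Set α}
    (hs : s.PartiallyWellOrderedOn r) :
    ∀ d : ℕ, {t : RT α | t.depth ≤ d ∧ ∀ a ∈ t.flat, a ∈ s}.PartiallyWellOrderedOn (TEmb r) := by
  haveI : IsRefl (RT α) (TEmb r) := ⟨TEmb.refl href⟩
  haveI : IsTrans (RT α) (TEmb r) := ⟨TEmb.trans htr⟩
  haveI : IsRefl α r := ⟨href⟩
  haveI : IsTrans α r := ⟨fun _ _ _ h h' => htr h h'⟩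
  haveI : IsPreorder (RT α) (TEmb r) := { refl := TEmb.refl href, trans := TEmb.trans htr }
  haveI : IsPreorder α r := { refl := href, trans := fun _ _ _ h h' => htr h h' }
  intro d
  induction d with
  | zero =>
    rw [Set.partiallyWellOrderedOn_iff_exists_lt]
    intro f hf
    exact absurd (hf 0).1 (by have := (f 0).depth_pos; omega)
  | succ d ih =>
    have hlists := ih.partiallyWellOrderedOn_sublistForall₂ (r := TEmb r)
    have hprod := hs.prod hlists
    rw [Set.partiallyWellOrderedOn_iff_exists_lt]
    intro f hf
    have hmem : ∀ n, ((f n).dat, (f n).children) ∈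
        s ×ˢ {l : List (RT α) | ∀ x ∈ l, x ∈ {t : RT α | t.depth ≤ d ∧ ∀ a ∈ t.flat, a ∈ s}} := by
      intro n
      constructor
      · exact (hf n).2 _ (f n).dat_mem_flat
      · intro t ht
        have h1 : t.depth < (f n).depth := by
          have := RT.depth_lt_of_mem (a := (f n).dat) (ts := (f n).children) ht
          rwa [RT.eta] at this
        refine ⟨by have := (hf n).1; omega, fun x hx => (hf n).2 x ?_⟩
        have := RT.flat_subset_of_mem (a := (f n).dat) ht x hx
        rwa [RT.eta] at this
    obtain ⟨i, j, hij, h1, h2⟩ := hprod.exists_lt (f := fun n => ((f n).dat, (f n).children)) hmem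
    refine ⟨i, j, hij, ?_⟩
    have := TEmb.node (r := r) h1 h2
    rwa [RT.eta, RT.eta] at this
end PWO

open scoped Classical

namespace Ding

theorem sublist_flatMap {α β : Type*} {l₁ l₂ : List α} (h : l₁.Sublist l₂) (f : α → List β) :
    (l₁.flatMap f).Sublist (l₂.flatMap f) := by
  induction h with
  | slnil => simp
  | cons a h ih =>
    rw [List.flatMap_cons]
    exact ih.trans (List.sublist_append_right _ _)
  | cons_cons a h ih =>
    rw [List.flatMap_cons, List.flatMap_cons]
    exact (List.Sublist.refl _).append ih

variable {S : Type*}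

/-- relation on node data -/
def rD (le : S → S → Prop) : (List Bool × S) → (List Bool × S) → Prop :=
  fun p q => p.1 = q.1 ∧ le p.2 q.2

variable (θ : LSGraph S)

/-- vertex-decorated trees for `θ` -/
abbrev VT := RT (Fin θ.n × (List Bool × S))

def forget (t : VT θ) : RT (List Bool × S) := t.map Prod.snd

def verts (t : VT θ) : List (Fin θ.n) := t.flat.map Prod.fst

@[simp] theorem verts_node (a : Fin θ.n × (List Bool × S)) (ts : List (VT θ)) :
    verts θ (.node a ts) = a.1 :: ts.flatMap (verts θ) := by
  simp only [verts, RT.flat_node, List.map_cons, List.map_flatMap]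
  rfl

@[simp] theorem forget_node (a : Fin θ.n × (List Bool × S)) (ts : List (VT θ)) :
    forget θ (.node a ts) = .node a.2 (ts.map (forget θ)) := by
  simp [forget]

/-- mutual non-adjacency of the vertex sets of two trees -/
def nadj (t t' : VT θ) : Prop := ∀ u ∈ verts θ t, ∀ w ∈ verts θ t', ¬ θ.G.Adj u w

/-- `Real θ t anc` : the decorated tree `t` faithfully represents the induced
subgraph of `θ` on its vertices, below the ancestor stack `anc`. -/
inductive Real : VT θ → List (Fin θ.n) → Prop
  | node {v : Fin θ.n} {bits : List Bool} {s : S} {ts : List (VT θ)} {anc : List (Fin θ.n)} :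
      bits = anc.map (fun u => decide (θ.G.Adj v u)) →
      s = θ.L v →
      (∀ t ∈ ts, Real t (v :: anc)) →
      (v :: ts.flatMap (verts θ)).Nodup →
      ts.Pairwise (nadj θ) →
      Real (.node (v, (bits, s)) ts) anc

variable {θ}
variable {θ₁ θ₂ : LSGraph S} (le : S → S → Prop)

/-- matched-pairs soundness -/
def MOK (mp : List (Fin θ₁.n × Fin θ₂.n)) : Prop :=
  (∀ p ∈ mp, le (θ₁.L p.1) (θ₂.L p.2)) ∧
  (∀ p ∈ mp, ∀ q ∈ mp, (θ₁.G.Adj p.1 q.1 ↔ θ₂.G.Adj p.2 q.2))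

def ANC (mp : List (Fin θ₁.n × Fin θ₂.n)) (anc₁ : List (Fin θ₁.n))
    (anc₂ : List (Fin θ₂.n)) : Prop :=
  ∀ p ∈ mp, ∀ i : ℕ, ∀ u₁ u₂, anc₁[i]? = some u₁ → anc₂[i]? = some u₂ →
    (θ₁.G.Adj p.1 u₁ ↔ θ₂.G.Adj p.2 u₂)

/-- tree-level conclusion -/
def TC (t₁ : VT θ₁) (t₂ : VT θ₂) (anc₁ : List (Fin θ₁.n)) (anc₂ : List (Fin θ₂.n)) : Prop :=
  ∃ mp : List (Fin θ₁.n × Fin θ₂.n),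
    mp.map Prod.fst = verts θ₁ t₁ ∧ (mp.map Prod.snd).Nodup ∧
    (∀ p ∈ mp, p.2 ∈ verts θ₂ t₂) ∧ MOK le mp ∧ ANC mp anc₁ anc₂

theorem LB_forest {ts₁ : List (VT θ₁)} {ts₂ : List (VT θ₂)}
    {anc₁ : List (Fin θ₁.n)} {anc₂ : List (Fin θ₂.n)}
    (htree : ∀ t₁ ∈ ts₁, ∀ t₂ : VT θ₂, TEmb (rD le) (forget θ₁ t₁) (forget θ₂ t₂) →
      Real θ₁ t₁ anc₁ → Real θ₂ t₂ anc₂ → TC le t₁ t₂ anc₁ anc₂)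
    (hF : List.Forall₂ (fun a b => TEmb (rD le) (forget θ₁ a) (forget θ₂ b)) ts₁ ts₂)
    (hR₁ : ∀ t ∈ ts₁, Real θ₁ t anc₁) (hR₂ : ∀ t ∈ ts₂, Real θ₂ t anc₂)
    (hP₁ : ts₁.Pairwise (nadj θ₁)) (hP₂ : ts₂.Pairwise (nadj θ₂))
    (hN₂ : (ts₂.flatMap (verts θ₂)).Nodup) :
    ∃ mp : List (Fin θ₁.n × Fin θ₂.n),
      mp.map Prod.fst = ts₁.flatMap (verts θ₁) ∧ (mp.map Prod.snd).Nodup ∧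
      (∀ p ∈ mp, p.2 ∈ ts₂.flatMap (verts θ₂)) ∧ MOK le mp ∧ ANC mp anc₁ anc₂ := by
  induction hF with
  | nil => exact ⟨[], by simp, by simp, by simp, ⟨by simp, by simp⟩, by simp [ANC]⟩
  | @cons a b tl₁ tl₂ hab htl ih =>
    obtain ⟨mph, hhf, hhsn, hhmem, hhmok, hhanc⟩ :=
      htree a (List.mem_cons_self) b hab (hR₁ a (List.mem_cons_self))
        (hR₂ b (List.mem_cons_self))
    have hN₂' : (tl₂.flatMap (verts θ₂)).Nodup := by
      rw [List.flatMap_cons] at hN₂; exact (List.nodup_append.1 hN₂).2.1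
    obtain ⟨mpt, htf, htsn, htmem, htmok, htanc⟩ :=
      ih (fun t ht => htree t (List.mem_cons_of_mem _ ht))
        (fun t ht => hR₁ t (List.mem_cons_of_mem _ ht))
        (fun t ht => hR₂ t (List.mem_cons_of_mem _ ht))
        (List.Pairwise.of_cons hP₁) (List.Pairwise.of_cons hP₂) hN₂'
    have hdisj : List.Disjoint (verts θ₂ b) (tl₂.flatMap (verts θ₂)) := by
      rw [List.flatMap_cons] at hN₂; exact List.disjoint_of_nodup_append hN₂
    have hna₁ : ∀ u ∈ verts θ₁ a, ∀ w ∈ tl₁.flatMap (verts θ₁), ¬ θ₁.G.Adj u w := by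
      intro u hu w hw
      obtain ⟨t, ht, hw⟩ := List.mem_flatMap.1 hw
      exact (List.pairwise_cons.1 hP₁).1 t ht u hu w hw
    have hna₂ : ∀ u ∈ verts θ₂ b, ∀ w ∈ tl₂.flatMap (verts θ₂), ¬ θ₂.G.Adj u w := by
      intro u hu w hw
      obtain ⟨t, ht, hw⟩ := List.mem_flatMap.1 hw
      exact (List.pairwise_cons.1 hP₂).1 t ht u hu w hw
    refine ⟨mph ++ mpt, ?_, ?_, ?_, ⟨?_, ?_⟩, ?_⟩
    · simp [hhf, htf]
    · rw [List.map_append]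
      refine List.Nodup.append hhsn htsn ?_
      intro x hx hx'
      obtain ⟨p, hp, rfl⟩ := List.mem_map.1 hx
      obtain ⟨q, hq, hpq⟩ := List.mem_map.1 hx'
      exact hdisj (hhmem p hp) (hpq ▸ htmem q hq)
    · intro p hp
      rcases List.mem_append.1 hp with h | h
      · exact List.mem_flatMap.2 ⟨b, List.mem_cons_self, hhmem p h⟩
      · rw [List.flatMap_cons]; exact List.mem_append_right _ (htmem p h)
    · intro p hp
      rcases List.mem_append.1 hp with h | h
      exacts [hhmok.1 p h, htmok.1 p h]
    · intro p hp q hq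
      have fst_h : ∀ x, x ∈ mph → x.1 ∈ verts θ₁ a := by
        intro x hx; rw [← hhf]; exact List.mem_map_of_mem hx
      have fst_t : ∀ x, x ∈ mpt → x.1 ∈ tl₁.flatMap (verts θ₁) := by
        intro x hx; rw [← htf]; exact List.mem_map_of_mem hx
      rcases List.mem_append.1 hp with h1 | h1 <;> rcases List.mem_append.1 hq with h2 | h2
      · exact hhmok.2 p h1 q h2
      · constructor
        · intro had; exact absurd had (hna₁ _ (fst_h p h1) _ (fst_t q h2))
        · intro had; exact absurd had (hna₂ _ (hhmem p h1) _ (htmem q h2))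
      · constructor
        · intro had
          exact absurd had.symm (hna₁ _ (fst_h q h2) _ (fst_t p h1))
        · intro had
          exact absurd had.symm (hna₂ _ (hhmem q h2) _ (htmem p h1))
      · exact htmok.2 p h1 q h2
    · intro p hp i u₁ u₂ h1 h2
      rcases List.mem_append.1 hp with h | h
      exacts [hhanc p h i u₁ u₂ h1 h2, htanc p h i u₁ u₂ h1 h2]

theorem LB_tree : ∀ (t₁ : VT θ₁) (t₂ : VT θ₂) (anc₁ : List (Fin θ₁.n)) (anc₂ : List (Fin θ₂.n)),
    anc₁.length = anc₂.length → TEmb (rD le) (forget θ₁ t₁) (forget θ₂ t₂) →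
    Real θ₁ t₁ anc₁ → Real θ₂ t₂ anc₂ → TC le t₁ t₂ anc₁ anc₂ := by
  have key : ∀ N : ℕ, ∀ t₁ : VT θ₁, t₁.depth ≤ N →
      ∀ (t₂ : VT θ₂) anc₁ anc₂, anc₁.length = anc₂.length →
      TEmb (rD le) (forget θ₁ t₁) (forget θ₂ t₂) →
      Real θ₁ t₁ anc₁ → Real θ₂ t₂ anc₂ → TC le t₁ t₂ anc₁ anc₂ := by
    intro N
    induction N with
    | zero => intro t₁ h; exact absurd h (by have := t₁.depth_pos; omega)
    | succ N ih =>
      rintro ⟨⟨v₁, b₁, s₁⟩, ts₁⟩ hd ⟨⟨v₂, b₂, s₂⟩, ts₂⟩ anc₁ anc₂ hlen hTE hR₁ hR₂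
      rw [forget_node, forget_node] at hTE
      cases hTE with
      | node hdat hsl =>
        rw [List.sublistForall₂_map_left_iff, List.sublistForall₂_map_right_iff,
          List.sublistForall₂_iff] at hsl
        obtain ⟨ts₂', hF0, hsub⟩ := hsl
        cases hR₁ with
        | node hb₁ hs₁ hRc₁ hNd₁ hP₁ =>
          cases hR₂ with
          | node hb₂ hs₂ hRc₂ hNd₂ hP₂ =>
            have hR₂' : ∀ t ∈ ts₂', Real θ₂ t (v₂ :: anc₂) :=
              fun t ht => hRc₂ t (hsub.subset ht)
            have hP₂' : ts₂'.Pairwise (nadj θ₂) := hP₂.sublist hsub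
            have hN₂' : (ts₂'.flatMap (verts θ₂)).Nodup :=
              ((List.nodup_cons.1 hNd₂).2).sublist (sublist_flatMap hsub _)
            obtain ⟨mpc, hcf, hcsn, hcmem, hcmok, hcanc⟩ :=
              LB_forest le
                (fun t ht t' hte hr hr' => by
                  refine ih t ?_ t' _ _ (by simp [hlen]) hte hr hr'
                  have := RT.depth_lt_of_mem (a := (v₁, (b₁, s₁))) ht
                  omega)
                hF0 hRc₁ hR₂' hP₁ hP₂' hN₂'
            have hcmem₂ : ∀ p ∈ mpc, p.2 ∈ ts₂.flatMap (verts θ₂) := by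
              intro p hp
              obtain ⟨t, ht, h⟩ := List.mem_flatMap.1 (hcmem p hp)
              exact List.mem_flatMap.2 ⟨t, hsub.subset ht, h⟩
            refine ⟨(v₁, v₂) :: mpc, ?_, ?_, ?_, ⟨?_, ?_⟩, ?_⟩
            · simp [hcf]
            · rw [List.map_cons]
              refine List.nodup_cons.2 ⟨?_, hcsn⟩
              intro hmem
              obtain ⟨q, hq, hq2⟩ := List.mem_map.1 hmem
              exact (List.nodup_cons.1 hNd₂).1 (by rw [show v₂ = q.2 from hq2.symm]; exact hcmem₂ q hq)
            · intro p hp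
              rcases List.mem_cons.1 hp with rfl | hp
              · simp
              · rw [verts_node]
                exact List.mem_cons_of_mem _ (hcmem₂ p hp)
            · intro p hp
              rcases List.mem_cons.1 hp with rfl | hp
              · simpa [hs₁, hs₂] using hdat.2
              · exact hcmok.1 p hp
            · -- adjacency iff
              have root_child : ∀ q ∈ mpc, (θ₁.G.Adj v₁ q.1 ↔ θ₂.G.Adj v₂ q.2) := by
                intro q hq
                have := hcanc q hq 0 v₁ v₂ (by simp) (by simp)
                rw [θ₁.G.adj_comm, θ₂.G.adj_comm]; exact this
              intro p hp q hq
              rcases List.mem_cons.1 hp with rfl | hp <;> rcases List.mem_cons.1 hq with rfl | hq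
              · simp
              · exact root_child q hq
              · rw [θ₁.G.adj_comm, θ₂.G.adj_comm]; exact root_child p hp
              · exact hcmok.2 p hp q hq
            · intro p hp i u₁ u₂ h1 h2
              rcases List.mem_cons.1 hp with rfl | hp
              · have e1 : b₁[i]? = some (decide (θ₁.G.Adj v₁ u₁)) := by
                  rw [hb₁, List.getElem?_map, h1]; rfl
                have e2 : b₂[i]? = some (decide (θ₂.G.Adj v₂ u₂)) := by
                  rw [hb₂, List.getElem?_map, h2]; rfl
                have : decide (θ₁.G.Adj v₁ u₁) = decide (θ₂.G.Adj v₂ u₂) := by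
                  have := hdat.1
                  simp only at this
                  rw [this] at e1
                  rw [e1] at e2
                  exact (Option.some.inj e2)
                simpa [decide_eq_decide] using this
              · exact hcanc p hp (i + 1) u₁ u₂ (by simpa using h1) (by simpa using h2)
  intro t₁ t₂ anc₁ anc₂
  exact key t₁.depth t₁ le_rfl t₂ anc₁ anc₂

end Ding

namespace Ding
variable {S : Type*}

theorem depth_node_le {α : Type*} {a : α} {ts : List (RT α)} {d : ℕ}
    (h : ∀ t ∈ ts, RT.depth t ≤ d) : RT.depth (.node a ts) ≤ d + 1 := by
  rw [RT.depth_node]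
  have : (ts.map RT.depth).foldr max 0 ≤ d := by
    induction ts with
    | nil => simp
    | cons t ts ih =>
      simp only [List.map_cons, List.foldr_cons, max_le_iff]
      exact ⟨h t (List.mem_cons_self), ih fun t ht => h t (List.mem_cons_of_mem _ ht)⟩
  omega

theorem real_verts_nodup {θ : LSGraph S} {t : VT θ} {anc : List (Fin θ.n)}
    (h : Real θ t anc) : (verts θ t).Nodup := by
  cases h with
  | node h1 h2 h3 h4 h5 => rw [verts_node]; exact h4

/-- The subgraph of `θ` induced on the finite vertex set `V` (as a graph on all of `Fin θ.n`). -/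
def gOn (θ : LSGraph S) (V : Finset (Fin θ.n)) : SimpleGraph (Fin θ.n) where
  Adj a b := θ.G.Adj a b ∧ a ∈ V ∧ b ∈ V
  symm := ⟨by rintro a b ⟨h, ha, hb⟩; exact ⟨h.symm, hb, ha⟩⟩
  loopless := ⟨by rintro a ⟨h, -⟩; exact θ.G.irrefl h⟩

variable {θ : LSGraph S}

theorem reach_transfer {V W : Finset (Fin θ.n)} {x y : Fin θ.n} (p : (gOn θ V).Walk x y)
    (hs : ∀ z ∈ p.support, z ∈ W) : (gOn θ W).Reachable x y := by
  induction p with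
  | nil => exact SimpleGraph.Reachable.refl _
  | @cons a b c h q ih =>
    have ha : a ∈ W := hs a (by simp)
    have hb : b ∈ W := hs b (by simp [q.start_mem_support])
    exact (SimpleGraph.Adj.reachable (G := gOn θ W) ⟨h.1, ha, hb⟩).trans
      (ih fun z hz => hs z (by simp [hz]))

theorem support_subset_of_walk {V : Finset (Fin θ.n)} {x y : Fin θ.n}
    (p : (gOn θ V).Walk x y) (hx : x ∈ V) : ∀ z ∈ p.support, z ∈ V := by
  induction p with
  | nil => intro z hz; simp at hz; subst hz; exact hx
  | @cons a b c h q ih =>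
    intro z hz
    rw [SimpleGraph.Walk.support_cons, List.mem_cons] at hz
    rcases hz with rfl | hz
    · exact hx
    · exact ih h.2.2 z hz

theorem support_subset_of_walk' {V : Finset (Fin θ.n)} {x y : Fin θ.n}
    (p : (gOn θ V).Walk x y) (hy : y ∈ V) : ∀ z ∈ p.support, z ∈ V := by
  induction p with
  | nil => intro z hz; simp at hz; subst hz; exact hy
  | @cons a b c h q ih =>
    intro z hz
    rw [SimpleGraph.Walk.support_cons, List.mem_cons] at hz
    rcases hz with rfl | hz
    · exact h.2.1
    · exact ih hy z hz

theorem reach_of_mem_support {V : Type*} {G : SimpleGraph V} :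
    ∀ {x y : V} (p : G.Walk x y), ∀ z ∈ p.support, G.Reachable x z := by
  intro x y p
  induction p with
  | nil => intro z hz; simp at hz; subst hz; exact SimpleGraph.Reachable.refl _
  | @cons a b c h q ih =>
    intro z hz
    rw [SimpleGraph.Walk.support_cons, List.mem_cons] at hz
    rcases hz with rfl | hz
    · exact SimpleGraph.Reachable.refl _
    · exact (SimpleGraph.Adj.reachable h).trans (ih z hz)

/-- connected component of `v` inside `V` -/
noncomputable def comp (θ : LSGraph S) (V : Finset (Fin θ.n)) (v : Fin θ.n) :
    Finset (Fin θ.n) :=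
  V.filter (fun u => (gOn θ V).Reachable v u)

theorem comp_subset {V : Finset (Fin θ.n)} {v : Fin θ.n} : comp θ V v ⊆ V :=
  Finset.filter_subset _ _

theorem mem_comp_self {V : Finset (Fin θ.n)} {v : Fin θ.n} (h : v ∈ V) : v ∈ comp θ V v :=
  Finset.mem_filter.2 ⟨h, SimpleGraph.Reachable.refl _⟩

theorem mem_comp_of_reach {V : Finset (Fin θ.n)} {v u w : Fin θ.n} (hu : u ∈ comp θ V v)
    (h : (gOn θ V).Reachable u w) (hw : w ∈ V) : w ∈ comp θ V v :=
  Finset.mem_filter.2 ⟨hw, ((Finset.mem_filter.1 hu).2).trans h⟩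

theorem comp_closed {V : Finset (Fin θ.n)} {v u w : Fin θ.n} (hu : u ∈ comp θ V v)
    (h : θ.G.Adj u w) (hw : w ∈ V) : w ∈ comp θ V v :=
  mem_comp_of_reach hu (SimpleGraph.Adj.reachable ⟨h, comp_subset hu, hw⟩) hw

theorem reach_in_comp {V : Finset (Fin θ.n)} {v u : Fin θ.n} (hu : u ∈ comp θ V v) :
    (gOn θ (comp θ V v)).Reachable v u := by
  obtain ⟨p⟩ := (Finset.mem_filter.1 hu).2
  refine reach_transfer p fun z hz => ?_
  exact Finset.mem_filter.2 ⟨support_subset_of_walk' p (Finset.mem_filter.1 hu).1 z hz,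
    reach_of_mem_support p z hz⟩

/-- rooted path bound : every path of `θ` starting at `r` and staying in `C`
has length at most `d` -/
def RB (θ : LSGraph S) (C : Finset (Fin θ.n)) (r : Fin θ.n) (d : ℕ) : Prop :=
  ∀ (w : Fin θ.n) (p : θ.G.Walk r w), p.IsPath → (∀ x ∈ p.support, x ∈ C) → p.length ≤ d

theorem RB_mono {C C' : Finset (Fin θ.n)} {r : Fin θ.n} {d : ℕ} (h : RB θ C r d)
    (hsub : C' ⊆ C) : RB θ C' r d :=
  fun w p hp hs => h w p hp fun x hx => hsub (hs x hx)

/-- rooted tree existence -/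
def TEx (θ : LSGraph S) (C : Finset (Fin θ.n)) (anc : List (Fin θ.n)) (d : ℕ) : Prop :=
  ∃ t : VT θ, Real θ t anc ∧ (∀ x, x ∈ verts θ t ↔ x ∈ C) ∧ t.depth ≤ d + 1 ∧
    ∀ p ∈ t.flat, p.2.1.length ≤ anc.length + d

/-- forest existence below a root -/
def IEx (θ : LSGraph S) (W : Finset (Fin θ.n)) (anc : List (Fin θ.n)) (d : ℕ) : Prop :=
  ∃ ts : List (VT θ), (∀ t ∈ ts, Real θ t anc) ∧ (ts.flatMap (verts θ)).Nodup ∧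
    ts.Pairwise (nadj θ) ∧ (∀ x, x ∈ ts.flatMap (verts θ) ↔ x ∈ W) ∧
    (∀ t ∈ ts, t.depth ≤ d) ∧ ∀ t ∈ ts, ∀ p ∈ t.flat, p.2.1.length + 1 ≤ anc.length + d

theorem construct (θ : LSGraph S) : ∀ m : ℕ,
    (∀ (C : Finset (Fin θ.n)) (r : Fin θ.n) (anc : List (Fin θ.n)) (d : ℕ),
      C.card ≤ m → r ∈ C → (∀ u ∈ C, (gOn θ C).Reachable r u) → RB θ C r d →
      TEx θ C anc d) ∧
    (∀ (W : Finset (Fin θ.n)) (r : Fin θ.n) (anc : List (Fin θ.n)) (d : ℕ),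
      W.card ≤ m → r ∉ W → (∀ w ∈ W, (gOn θ (insert r W)).Reachable r w) →
      RB θ (insert r W) r d → IEx θ W (r :: anc) d) := by
  intro m
  induction m using Nat.strong_induction_on with
  | _ m ih =>
  have hP : ∀ (C : Finset (Fin θ.n)) (r : Fin θ.n) (anc : List (Fin θ.n)) (d : ℕ),
      C.card ≤ m → r ∈ C → (∀ u ∈ C, (gOn θ C).Reachable r u) → RB θ C r d →
      TEx θ C anc d := by
    rintro C r anc d hcard hr hreach hRB
    rcases m with _ | m
    · exact absurd (Finset.card_eq_zero.1 (Nat.le_zero.1 hcard) ▸ hr) (Finset.notMem_empty r)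
    obtain ⟨ts, h1, h2, h3, h4, h5, h6⟩ :=
      (ih m (Nat.lt_succ_self m)).2 (C.erase r) r anc d
        (by have := Finset.card_erase_of_mem hr; omega)
        (Finset.notMem_erase r C)
        (fun w hw => by
          rw [Finset.insert_erase hr]
          exact hreach w (Finset.mem_of_mem_erase hw))
        (by rw [Finset.insert_erase hr]; exact hRB)
    refine ⟨.node (r, (anc.map fun u => decide (θ.G.Adj r u), θ.L r)) ts, ?_, ?_, ?_, ?_⟩
    · refine Real.node rfl rfl h1 (List.nodup_cons.2 ⟨?_, h2⟩) h3
      intro hmem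
      exact Finset.notMem_erase r C ((h4 r).1 hmem)
    · intro x
      rw [verts_node]
      simp only [List.mem_cons]
      constructor
      · rintro (rfl | hx)
        · exact hr
        · exact Finset.mem_of_mem_erase ((h4 x).1 hx)
      · intro hx
        by_cases hxr : x = r
        · exact Or.inl hxr
        · exact Or.inr ((h4 x).2 (Finset.mem_erase.2 ⟨hxr, hx⟩))
    · exact depth_node_le h5
    · intro p hp
      rw [RT.flat_node] at hp
      rcases List.mem_cons.1 hp with rfl | hp
      · simp
      · obtain ⟨t, ht, hp⟩ := List.mem_flatMap.1 hp
        have := h6 t ht p hp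
        simp only [List.length_cons] at this
        omega
  refine ⟨hP, ?_⟩
  rintro W r anc d hcard hr hreach hRB
  by_cases hW : W = ∅
  · exact ⟨[], by simp, by simp, by simp, by simp [hW], by simp, by simp⟩
  obtain ⟨w0, hw0⟩ := Finset.nonempty_iff_ne_empty.2 hW
  obtain ⟨p0⟩ := hreach w0 hw0
  obtain ⟨qq, hqq⟩ := p0.toPath
  clear p0
  cases qq with
  | nil => exact absurd hw0 hr
  | @cons _ b _ hadj q' =>
    rw [SimpleGraph.Walk.cons_isPath_iff] at hqq
    have hbr : b ≠ r := fun h => hqq.2 (h ▸ q'.start_mem_support)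
    have hbW : b ∈ W := by
      rcases Finset.mem_insert.1 hadj.2.2 with h | h
      · exact absurd h hbr
      · exact h
    have hrb : θ.G.Adj r b := hadj.1
    -- d ≥ 1
    have hd1 : 1 ≤ d := by
      have hp : (SimpleGraph.Walk.cons hrb .nil).IsPath := by
        rw [SimpleGraph.Walk.cons_isPath_iff]
        refine ⟨SimpleGraph.Walk.IsPath.nil, ?_⟩
        simp only [SimpleGraph.Walk.support_nil, List.mem_singleton]
        exact fun h => hbr h.symm
      have := hRB b (.cons hrb .nil) hp (by
        intro x hx
        simp only [SimpleGraph.Walk.support_cons, SimpleGraph.Walk.support_nil,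
          List.mem_cons, List.mem_singleton] at hx
        rcases hx with rfl | rfl | h
        · exact Finset.mem_insert_self _ _
        · exact Finset.mem_insert_of_mem hbW
        · simp at h)
      simpa using this
    set C' := comp θ W b with hC'
    have hbC' : b ∈ C' := mem_comp_self hbW
    -- tree on C'
    obtain ⟨t, tReal, tVerts, tDepth, tBits⟩ :=
      hP C' b (r :: anc) (d - 1)
        (le_trans (Finset.card_le_card comp_subset) hcard)
        hbC'
        (fun u hu => reach_in_comp hu)
        (by
          intro w p hp hs
          have hcons : (SimpleGraph.Walk.cons hrb p).IsPath := by
            rw [SimpleGraph.Walk.cons_isPath_iff]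
            refine ⟨hp, fun hmem => hr (comp_subset (hs r hmem))⟩
          have := hRB w (.cons hrb p) hcons (by
            intro x hx
            rw [SimpleGraph.Walk.support_cons, List.mem_cons] at hx
            rcases hx with rfl | hx
            · exact Finset.mem_insert_self _ _
            · exact Finset.mem_insert_of_mem (comp_subset (hs x hx)))
          simp only [SimpleGraph.Walk.length_cons] at this
          omega)
    -- recursive forest on W \ C'
    have hcard' : (W \ C').card ≤ m - 1 := by
      have hlt : (W \ C').card < W.card :=
        Finset.card_lt_card ((Finset.ssubset_iff_of_subset (Finset.sdiff_subset)).2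
          ⟨b, hbW, by simp [hbC']⟩)
      omega
    have hm1 : m - 1 < m := by
      have : 1 ≤ W.card := Finset.card_pos.2 ⟨w0, hw0⟩
      omega
    obtain ⟨ts', g1, g2, g3, g4, g5, g6⟩ :=
      (ih (m - 1) hm1).2 (W \ C') r anc d
        hcard'
        (fun h => hr (Finset.mem_sdiff.1 h).1)
        (by
          intro w hw
          obtain ⟨pr⟩ := hreach w (Finset.mem_sdiff.1 hw).1
          obtain ⟨pp, hpp⟩ := pr.toPath
          refine reach_transfer pp ?_
          intro z hz
          have hzW : z ∈ insert r W :=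
            support_subset_of_walk pp (Finset.mem_insert_self r W) z hz
          rcases Finset.mem_insert.1 hzW with rfl | hzW
          · exact Finset.mem_insert_self _ _
          refine Finset.mem_insert_of_mem (Finset.mem_sdiff.2 ⟨hzW, fun hzC' => ?_⟩)
          -- z ∈ C' leads to w ∈ C', contradiction
          have hzr : z ≠ r := fun h => hr (h ▸ hzW)
          set pd := pp.dropUntil z hz with hpd
          have hrnot : r ∉ pd.support := by
            intro hrmem
            have hspec := pp.take_spec hz
            have hnodup := hpp.support_nodup
            rw [← hspec, SimpleGraph.Walk.support_append] at hnodup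
            rw [SimpleGraph.Walk.support_eq_cons pd, List.mem_cons] at hrmem
            rcases hrmem with h | h
            · exact hzr h.symm
            · exact (List.disjoint_of_nodup_append hnodup)
                ((pp.takeUntil z hz).start_mem_support) h
          have hsupW : ∀ y ∈ pd.support, y ∈ W := by
            intro y hy
            have : y ∈ insert r W :=
              support_subset_of_walk pp (Finset.mem_insert_self r W) y
                (SimpleGraph.Walk.support_dropUntil_subset pp hz hy)
            rcases Finset.mem_insert.1 this with rfl | h
            · exact absurd hy hrnot
            · exact h
          have hreachzw : (gOn θ W).Reachable z w := reach_transfer pd hsupW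
          exact (Finset.mem_sdiff.1 hw).2 (mem_comp_of_reach hzC' hreachzw
            (Finset.mem_sdiff.1 hw).1))
        (RB_mono hRB (by
          intro x hx
          rcases Finset.mem_insert.1 hx with rfl | hx
          · exact Finset.mem_insert_self _ _
          · exact Finset.mem_insert_of_mem (Finset.mem_sdiff.1 hx).1))
    -- combine
    refine ⟨t :: ts', ?_, ?_, ?_, ?_, ?_, ?_⟩
    · intro s hs
      rcases List.mem_cons.1 hs with rfl | hs
      · exact tReal
      · exact g1 s hs
    · rw [List.flatMap_cons]
      refine List.Nodup.append (real_verts_nodup tReal) g2 ?_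
      intro x hx hx'
      have h1 : x ∈ C' := (tVerts x).1 hx
      have h2 : x ∈ W \ C' := (g4 x).1 hx'
      exact (Finset.mem_sdiff.1 h2).2 h1
    · refine List.pairwise_cons.2 ⟨?_, g3⟩
      intro t' ht' u hu w hw hadj'
      have huC : u ∈ C' := (tVerts u).1 hu
      have hwW : w ∈ W \ C' := (g4 w).1 (List.mem_flatMap.2 ⟨t', ht', hw⟩)
      exact (Finset.mem_sdiff.1 hwW).2
        (comp_closed huC hadj' (Finset.mem_sdiff.1 hwW).1)
    · intro x
      rw [List.flatMap_cons, List.mem_append]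
      constructor
      · rintro (hx | hx)
        · exact comp_subset ((tVerts x).1 hx)
        · exact (Finset.mem_sdiff.1 ((g4 x).1 hx)).1
      · intro hx
        by_cases hxC : x ∈ C'
        · exact Or.inl ((tVerts x).2 hxC)
        · exact Or.inr ((g4 x).2 (Finset.mem_sdiff.2 ⟨hx, hxC⟩))
    · intro s hs
      rcases List.mem_cons.1 hs with rfl | hs
      · have := tDepth
        omega
      · exact g5 s hs
    · intro s hs p hp
      rcases List.mem_cons.1 hs with rfl | hs
      · have := tBits p hp
        simp only [List.length_cons] at this ⊢
        omega
      · exact g6 s hs p hp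

end Ding

namespace Ding
variable {S : Type*}

/-- forest existence for arbitrary vertex sets, under the global path bound -/
def FEx (θ : LSGraph S) (k : ℕ) (V : Finset (Fin θ.n)) : Prop :=
  ∃ ts : List (VT θ), (∀ t ∈ ts, Real θ t []) ∧ (ts.flatMap (verts θ)).Nodup ∧
    ts.Pairwise (nadj θ) ∧ (∀ x, x ∈ ts.flatMap (verts θ) ↔ x ∈ V) ∧
    (∀ t ∈ ts, t.depth ≤ k + 1) ∧ ∀ t ∈ ts, ∀ p ∈ t.flat, p.2.1.length ≤ k

theorem exists_forest (θ : LSGraph S) (k : ℕ) (hbd : θ.PathBounded k) :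
    ∀ (m : ℕ) (V : Finset (Fin θ.n)), V.card ≤ m → FEx θ k V := by
  intro m
  induction m with
  | zero =>
    intro V hV
    have : V = ∅ := Finset.card_eq_zero.1 (Nat.le_zero.1 hV)
    exact ⟨[], by simp, by simp, by simp, by simp [this], by simp, by simp⟩
  | succ m ih =>
    intro V hV
    by_cases hVne : V = ∅
    · exact ⟨[], by simp, by simp, by simp, by simp [hVne], by simp, by simp⟩
    obtain ⟨v, hv⟩ := Finset.nonempty_iff_ne_empty.2 hVne
    set C := comp θ V v with hC
    have hvC : v ∈ C := mem_comp_self hv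
    obtain ⟨t, tReal, tVerts, tDepth, tBits⟩ :=
      (construct θ C.card).1 C v [] k le_rfl hvC (fun u hu => reach_in_comp hu)
        (fun w p hp _ => hbd v w p hp)
    have hcard' : (V \ C).card ≤ m := by
      have hlt : (V \ C).card < V.card :=
        Finset.card_lt_card ((Finset.ssubset_iff_of_subset (Finset.sdiff_subset)).2
          ⟨v, hv, by simp [hvC]⟩)
      omega
    obtain ⟨ts', g1, g2, g3, g4, g5, g6⟩ := ih (V \ C) hcard'
    refine ⟨t :: ts', ?_, ?_, ?_, ?_, ?_, ?_⟩
    · intro s hs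
      rcases List.mem_cons.1 hs with rfl | hs
      · exact tReal
      · exact g1 s hs
    · rw [List.flatMap_cons]
      refine List.Nodup.append (real_verts_nodup tReal) g2 ?_
      intro x hx hx'
      exact (Finset.mem_sdiff.1 ((g4 x).1 hx')).2 ((tVerts x).1 hx)
    · refine List.pairwise_cons.2 ⟨?_, g3⟩
      intro t' ht' u hu w hw hadj'
      have huC : u ∈ C := (tVerts u).1 hu
      have hwW : w ∈ V \ C := (g4 w).1 (List.mem_flatMap.2 ⟨t', ht', hw⟩)
      exact (Finset.mem_sdiff.1 hwW).2 (comp_closed huC hadj' (Finset.mem_sdiff.1 hwW).1)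
    · intro x
      rw [List.flatMap_cons, List.mem_append]
      constructor
      · rintro (hx | hx)
        · exact comp_subset ((tVerts x).1 hx)
        · exact (Finset.mem_sdiff.1 ((g4 x).1 hx)).1
      · intro hx
        by_cases hxC : x ∈ C
        · exact Or.inl ((tVerts x).2 hxC)
        · exact Or.inr ((g4 x).2 (Finset.mem_sdiff.2 ⟨hx, hxC⟩))
    · intro s hs
      rcases List.mem_cons.1 hs with rfl | hs
      · exact tDepth
      · exact g5 s hs
    · intro s hs p hp
      rcases List.mem_cons.1 hs with rfl | hs
      · simpa using tBits p hp
      · exact g6 s hs p hp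

theorem pwo_eq_of_finite {α : Type*} {s : Set α} (hs : s.Finite) :
    s.PartiallyWellOrderedOn (· = ·) := by
  rw [Set.partiallyWellOrderedOn_iff_exists_lt]
  intro f hf
  haveI := hs.to_subtype
  obtain ⟨i, j, hne, he⟩ :=
    Finite.exists_ne_map_eq_of_infinite (fun n : ℕ => (⟨f n, hf n⟩ : s))
  rcases lt_or_gt_of_ne hne with h | h
  · exact ⟨i, j, h, congrArg Subtype.val he⟩
  · exact ⟨j, i, h, (congrArg Subtype.val he).symm⟩

end Ding


open Ding in
/-- Ding's theorem, labeled version: every infinite sequence of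
`k`-path-bounded finite graphs labeled from a wqo contains an increasing pair
in the label-respecting induced subgraph ordering. -/
theorem ding_labeled {S : Type*} (le : S → S → Prop) (hwqo : IsWqo le) (k : ℕ)
    (f : ℕ → LSGraph S) (hbd : ∀ m : ℕ, (f m).PathBounded k) :
    ∃ i j : ℕ, i < j ∧ LSGraph.Emb le (f i) (f j) := by
  classical
  obtain ⟨hrefl, htrans, hseq⟩ := hwqo
  -- pwo of node data
  have pwoD : (({l : List Bool | l.length ≤ k} ×ˢ (Set.univ : Set S)) :
      Set (List Bool × S)).PartiallyWellOrderedOn (rD le) := by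
    have h1 : ({l : List Bool | l.length ≤ k}).PartiallyWellOrderedOn (· = ·) :=
      pwo_eq_of_finite (List.finite_length_le Bool k)
    have h2 : (Set.univ : Set S).PartiallyWellOrderedOn le :=
      Set.partiallyWellOrderedOn_iff_exists_lt.2 fun g _ => hseq g
    exact h1.prod h2
  have hrD_refl : ∀ a : List Bool × S, rD le a a := fun a => ⟨rfl, hrefl a.2⟩
  have hrD_trans : Transitive (rD le) := fun a b c h1 h2 => ⟨h1.1.trans h2.1, htrans h1.2 h2.2⟩
  -- pwo of bounded-depth trees
  have pwoT := pwo_trees hrD_refl hrD_trans pwoD (k + 1)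
  haveI : IsRefl (RT (List Bool × S)) (TEmb (rD le)) := ⟨TEmb.refl hrD_refl⟩
  haveI : IsTrans (RT (List Bool × S)) (TEmb (rD le)) := ⟨fun a b c => TEmb.trans hrD_trans a b c⟩
  haveI : IsPreorder (RT (List Bool × S)) (TEmb (rD le)) :=
    { refl := TEmb.refl hrD_refl, trans := fun a b c => TEmb.trans hrD_trans a b c }
  have pwoL := pwoT.partiallyWellOrderedOn_sublistForall₂ (r := TEmb (rD le))
  -- choose a faithful forest for each graph
  have hFE : ∀ m : ℕ, FEx (f m) k Finset.univ :=
    fun m => exists_forest (f m) k (hbd m) (Finset.univ.card) Finset.univ le_rfl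
  choose ts h1 h2 h3 h4 h5 h6 using hFE
  -- the forgetful sequence
  set g : ℕ → List (RT (List Bool × S)) := fun m => (ts m).map (forget (f m)) with hg
  have hgmem : ∀ m, g m ∈ {l : List (RT (List Bool × S)) |
      ∀ x ∈ l, x ∈ {t : RT (List Bool × S) | t.depth ≤ k + 1 ∧
        ∀ a ∈ t.flat, a ∈ ({l : List Bool | l.length ≤ k} ×ˢ (Set.univ : Set S))}} := by
    intro m x hx
    obtain ⟨t, ht, rfl⟩ := List.mem_map.1 hx
    refine ⟨?_, ?_⟩
    · rw [forget, RT.depth_map]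
      exact h5 m t ht
    · intro a ha
      rw [forget, RT.flat_map, List.mem_map] at ha
      obtain ⟨p, hp, rfl⟩ := ha
      exact ⟨h6 m t ht p hp, trivial⟩
  obtain ⟨i, j, hij, hgood⟩ := pwoL.exists_lt hgmem
  refine ⟨i, j, hij, ?_⟩
  -- extract a Forall₂ against a sublist of ts j
  rw [hg] at hgood
  simp only [List.sublistForall₂_map_left_iff, List.sublistForall₂_map_right_iff] at hgood
  rw [List.sublistForall₂_iff] at hgood
  obtain ⟨ts₂', hF, hsub⟩ := hgood
  obtain ⟨mp, hfst, hsnd, hmem, hmok, -⟩ :=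
    LB_forest (θ₁ := f i) (θ₂ := f j) le
      (fun t₁ _ t₂ hte hr₁ hr₂ => LB_tree le t₁ t₂ [] [] rfl hte hr₁ hr₂)
      hF (h1 i) (fun t ht => h1 j t (hsub.subset ht)) (h3 i) ((h3 j).sublist hsub)
      ((h2 j).sublist (sublist_flatMap hsub _))
  -- build the embedding
  have cover : ∀ v : Fin (f i).n, ∃ p ∈ mp, p.1 = v := by
    intro v
    have : v ∈ mp.map Prod.fst := by
      rw [hfst]
      exact (h4 i v).2 (Finset.mem_univ v)
    obtain ⟨p, hp, he⟩ := List.mem_map.1 this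
    exact ⟨p, hp, he⟩
  choose pr hpr1 hpr2 using cover
  have hinj : Function.Injective (fun v => (pr v).2) := by
    intro u v huv
    have := List.inj_on_of_nodup_map hsnd (hpr1 u) (hpr1 v) huv
    rw [← hpr2 u, ← hpr2 v, this]
  refine ⟨⟨fun v => (pr v).2, hinj⟩, ?_, ?_⟩
  · intro u v
    have := hmok.2 (pr u) (hpr1 u) (pr v) (hpr1 v)
    rwa [hpr2 u, hpr2 v] at this
  · intro v
    have := hmok.1 (pr v) (hpr1 v)
    rwa [hpr2 v] at this
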